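/- Let g ≥ 2 and V = (Fin (g+1) → ZMod 2). Under the right-composition action of O(V), the set of all linear forms on V is the disjoint union of exactly four orbits: the singleton {θ₀} where θ₀ : x ↦ 0, the singleton {θ₁} where θ₁ : x ↦ ∑_{i=0}^{g} x_i, the set orb₀ = {θ ≠ θ₀, θ₁ : ∑_{i=0}^{g} θ(e_i) = 0}, and the set orb₁ = {θ ≠ θ₀, θ₁ : ∑_{i=0}^{g} θ(e_i) = 1}. -/

import Mathlib

namespace FourOrbitsAux

open Finset

lemma z2 (a : ZMod 2) : a = 0 ∨ a = 1 := by revert a; decide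
lemma z2ms (a : ZMod 2) : a * a = a := by revert a; decide
lemma z2as (a : ZMod 2) : a + a = 0 := by revert a; decide

variable {n : ℕ}

def dot (x y : Fin n → ZMod 2) : ZMod 2 := ∑ i, x i * y i

lemma dot_comm (x y : Fin n → ZMod 2) : dot x y = dot y x :=
  Finset.sum_congr rfl fun i _ => mul_comm _ _

lemma dot_add_right (x y z : Fin n → ZMod 2) : dot x (y + z) = dot x y + dot x z := by
  simp [dot, mul_add, Finset.sum_add_distrib]

lemma dot_add_left (x y z : Fin n → ZMod 2) : dot (x + y) z = dot x z + dot y z := by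
  rw [dot_comm, dot_add_right, dot_comm z x, dot_comm z y]

lemma dot_smul_right (c : ZMod 2) (x y : Fin n → ZMod 2) : dot x (c • y) = c * dot x y := by
  simp [dot, Finset.mul_sum, mul_left_comm]

lemma dot_smul_left (c : ZMod 2) (x y : Fin n → ZMod 2) : dot (c • x) y = c * dot x y := by
  rw [dot_comm, dot_smul_right, dot_comm]

/-- transvection by `a` as a linear map -/
def tvL (a : Fin n → ZMod 2) : (Fin n → ZMod 2) →ₗ[ZMod 2] (Fin n → ZMod 2) where
  toFun x := x + dot a x • a
  map_add' x y := by
    rw [dot_add_right, add_smul]; abel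
  map_smul' c x := by
    rw [dot_smul_right, RingHom.id_apply, smul_add, mul_smul]

lemma tvL_apply (a x : Fin n → ZMod 2) : tvL a x = x + dot a x • a := rfl

lemma dot_tvL_right (a v x : Fin n → ZMod 2) : dot v (tvL a x) = dot (tvL a v) x := by
  rw [tvL_apply, tvL_apply, dot_add_right, dot_add_left, dot_smul_right, dot_smul_left,
    dot_comm v a]
  ring

lemma tvL_orth {a : Fin n → ZMod 2} (ha : dot a a = 0) (x y : Fin n → ZMod 2) :
    dot (tvL a x) (tvL a y) = dot x y := by
  rw [tvL_apply, tvL_apply, dot_add_left, dot_add_right, dot_add_right, dot_smul_left,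
    dot_smul_right, dot_smul_right, dot_smul_left, dot_comm x a, ha]
  generalize dot x y = p
  generalize dot a x = q
  generalize dot a y = r
  revert p q r; decide

lemma tvL_invol {a : Fin n → ZMod 2} (ha : dot a a = 0) :
    Function.Involutive (tvL a) := by
  intro x
  rw [tvL_apply, tvL_apply, dot_add_right, dot_smul_right, ha, mul_zero, add_zero,
    add_assoc, ← add_smul, z2as, zero_smul, add_zero]

/-- transvection by `a` as a linear equivalence -/
def tv (a : Fin n → ZMod 2) (ha : dot a a = 0) :
    (Fin n → ZMod 2) ≃ₗ[ZMod 2] (Fin n → ZMod 2) :=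
  { tvL a with
    invFun := tvL a
    left_inv := tvL_invol ha
    right_inv := tvL_invol ha }

lemma tv_apply (a : Fin n → ZMod 2) (ha : dot a a = 0) (x : Fin n → ZMod 2) :
    tv a ha x = tvL a x := rfl

lemma z2ne {a b : ZMod 2} (h : a ≠ b) : a + b = 1 := by revert a b; decide
lemma z2nn {a b : ZMod 2} (h : ¬ a = b + 1) : a = b := by revert a b; decide

lemma dot_single (x : Fin n → ZMod 2) (j : Fin n) : dot x (Pi.single j 1) = x j := by
  unfold dot
  rw [Finset.sum_eq_single j]
  · rw [Pi.single_eq_same, mul_one]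
  · intro i _ hij; rw [Pi.single_eq_of_ne hij, mul_zero]
  · intro h; exact absurd (Finset.mem_univ j) h

lemma sum_single (i : Fin n) : ∑ k, Pi.single i (1 : ZMod 2) k = 1 := by
  have := dot_single (fun _ => (1 : ZMod 2)) i
  simpa [dot] using this

lemma dot_self (x : Fin n → ZMod 2) : dot x x = ∑ i, x i :=
  Finset.sum_congr rfl fun i _ => z2ms _

lemma exists_pair (v w : Fin n → ZMod 2) (hv0 : v ≠ 0) (hv1 : v ≠ fun _ => 1)
    (hw0 : w ≠ 0) (hw1 : w ≠ fun _ => 1) :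
    ∃ i j, v i ≠ v j ∧ w i ≠ w j := by
  by_cases hD : ∃ i, v i = 1 ∧ w i = 1
  · obtain ⟨i, hvi, hwi⟩ := hD
    by_cases hA : ∃ j, v j = 0 ∧ w j = 0
    · obtain ⟨j, hvj, hwj⟩ := hA
      exact ⟨i, j, by rw [hvi, hvj]; exact one_ne_zero, by rw [hwi, hwj]; exact one_ne_zero⟩
    · push_neg at hA
      obtain ⟨j, hj⟩ := Function.ne_iff.mp hv1
      have hvj : v j = 0 := (z2 (v j)).resolve_right hj
      have hwj : w j = 1 := (z2 (w j)).resolve_left (hA j hvj)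
      obtain ⟨k, hk⟩ := Function.ne_iff.mp hw1
      have hwk : w k = 0 := (z2 (w k)).resolve_right hk
      have hvk : v k = 1 := (z2 (v k)).resolve_left fun h => hA k h hwk
      exact ⟨k, j, by rw [hvk, hvj]; exact one_ne_zero, by rw [hwk, hwj]; exact zero_ne_one⟩
  · push_neg at hD
    obtain ⟨i, hi⟩ := Function.ne_iff.mp hv0
    have hvi : v i = 1 := (z2 (v i)).resolve_left (by simpa using hi)
    have hwi : w i = 0 := (z2 (w i)).resolve_right (hD i hvi)
    obtain ⟨j, hj⟩ := Function.ne_iff.mp hw0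
    have hwj : w j = 1 := (z2 (w j)).resolve_left (by simpa using hj)
    have hvj : v j = 0 := (z2 (v j)).resolve_right fun h => hD j h hwj
    exact ⟨i, j, by rw [hvi, hvj]; exact one_ne_zero, by rw [hwi, hwj]; exact zero_ne_one⟩

lemma add_self_vec (u : Fin n → ZMod 2) : u + u = 0 := funext fun i => z2as _

lemma exists_T (v w : Fin n → ZMod 2)
    (hv0 : v ≠ 0) (hv1 : v ≠ fun _ => 1) (hw0 : w ≠ 0) (hw1 : w ≠ fun _ => 1)
    (hq : dot v v = dot w w) :
    ∃ T : (Fin n → ZMod 2) ≃ₗ[ZMod 2] (Fin n → ZMod 2),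
      (∀ x y, dot (T x) (T y) = dot x y) ∧ ∀ x, dot w x = dot v (T x) := by
  obtain ⟨b, hbb, hkey⟩ : ∃ b, dot b b = 0 ∧ dot b v * dot b w = dot v w + dot v v + 1 := by
    by_cases h : dot v w = dot v v + 1
    · refine ⟨0, by simp [dot], ?_⟩
      rw [h]
      have h0 : ∀ u : Fin n → ZMod 2, dot 0 u = 0 := by intro u; simp [dot]
      rw [h0, h0, zero_mul]
      generalize dot v v = q; revert q; decide
    · have h' : dot v w = dot v v := z2nn h
      obtain ⟨i, j, hvij, hwij⟩ := exists_pair v w hv0 hv1 hw0 hw1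
      refine ⟨(Pi.single i 1 + Pi.single j 1 : Fin n → ZMod 2), ?_, ?_⟩
      · rw [dot_self]
        have h1 : ∀ k, (Pi.single i 1 + Pi.single j 1 : Fin n → ZMod 2) k
            = (Pi.single i 1 : Fin n → ZMod 2) k + (Pi.single j 1 : Fin n → ZMod 2) k :=
          fun k => by rw [Pi.add_apply]
        rw [Finset.sum_congr rfl fun k _ => h1 k, Finset.sum_add_distrib,
          sum_single, sum_single]
        decide
      · rw [dot_comm _ v, dot_comm _ w, dot_add_right, dot_add_right,
          dot_single, dot_single, dot_single, dot_single, z2ne hvij, z2ne hwij, h', hq]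
        generalize dot w w = q; revert q; decide
  set w' := tvL b w with hw'def
  have hbw' : dot b w' = dot b w := by
    rw [hw'def, tvL_apply, dot_add_right, dot_smul_right, hbb, mul_zero, add_zero]
  have hvw' : dot v w' = dot v v + 1 := by
    rw [hw'def, tvL_apply, dot_add_right, dot_smul_right, dot_comm v b,
      mul_comm (dot b w) (dot b v), hkey]
    generalize dot v w = s
    generalize dot v v = q
    revert s q; decide
  have hw'w' : dot w' w' = dot v v := by rw [hw'def, tvL_orth hbb, hq]
  set a := v + w' with hadef
  have haa : dot a a = 0 := by
    rw [hadef, dot_add_left, dot_add_right, dot_add_right, hvw', dot_comm w' v, hvw', hw'w']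
    generalize dot v v = q; revert q; decide
  have hav : dot a v = 1 := by
    rw [hadef, dot_add_left, dot_comm w' v, hvw']
    generalize dot v v = q; revert q; decide
  have htav : tvL a v = w' := by
    rw [tvL_apply, hav, one_smul, hadef, ← add_assoc, add_self_vec, zero_add]
  have htbw' : tvL b w' = w := by
    rw [tvL_apply, hbw', hw'def, tvL_apply, add_assoc, ← add_smul, z2as, zero_smul, add_zero]
  refine ⟨(tv b hbb).trans (tv a haa), ?_, ?_⟩
  · intro x y
    show dot (tvL a (tvL b x)) (tvL a (tvL b y)) = dot x y
    rw [tvL_orth haa, tvL_orth hbb]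
  · intro x
    show dot w x = dot v (tvL a (tvL b x))
    rw [dot_tvL_right, htav, dot_tvL_right, htbw']


/-- the linear form `x ↦ ⟨v, x⟩` -/
def formL (v : Fin n → ZMod 2) : (Fin n → ZMod 2) →ₗ[ZMod 2] ZMod 2 where
  toFun x := dot v x
  map_add' x y := dot_add_right v x y
  map_smul' c x := by rw [dot_smul_right, smul_eq_mul, RingHom.id_apply]

lemma formL_apply (v x : Fin n → ZMod 2) : formL v x = dot v x := rfl

/-- every linear form is given by pairing with its coefficient vector -/
lemma apply_eq_dot (θ : (Fin n → ZMod 2) →ₗ[ZMod 2] ZMod 2) (x : Fin n → ZMod 2) :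
    θ x = dot (fun i => θ (Pi.single i 1)) x := by
  conv_lhs => rw [← Finset.univ_sum_single x]
  rw [map_sum]
  refine Finset.sum_congr rfl fun i _ => ?_
  have h1 : (Pi.single i (x i) : Fin n → ZMod 2) = x i • Pi.single i (1 : ZMod 2) := by
    rw [← Pi.single_smul, smul_eq_mul, mul_one]
  rw [h1, map_smul, smul_eq_mul, mul_comm]

/-- an orthogonal transformation fixes the all-ones vector -/
lemma fix_one (T : (Fin n → ZMod 2) ≃ₗ[ZMod 2] (Fin n → ZMod 2))
    (hT : ∀ x y, dot (T x) (T y) = dot x y) :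
    T (fun _ => 1) = fun _ => 1 := by
  funext j
  have h1 : ∀ z : Fin n → ZMod 2, dot (fun _ => 1) z = dot z z := by
    intro z
    refine Finset.sum_congr rfl fun i _ => ?_
    rw [one_mul, z2ms]
  set z := T.symm (Pi.single j 1) with hz
  have hzz : T z = Pi.single j 1 := T.apply_symm_apply _
  calc (T fun _ => 1) j = dot (T fun _ => 1) (T z) := by rw [hzz, dot_single]
    _ = dot (fun _ => 1) z := hT _ _
    _ = dot z z := h1 z
    _ = dot (T z) (T z) := (hT _ _).symm
    _ = 1 := by rw [hzz, dot_single, Pi.single_eq_same]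

lemma sum_ones : (∑ i, Pi.single i (1 : ZMod 2)) = fun _ : Fin n => (1 : ZMod 2) :=
  Finset.univ_sum_single _

section invariance

variable (θ θ' : (Fin n → ZMod 2) →ₗ[ZMod 2] ZMod 2)
variable (T : (Fin n → ZMod 2) ≃ₗ[ZMod 2] (Fin n → ZMod 2))
variable (hT : ∀ x y, dot (T x) (T y) = dot x y) (hθ : ∀ x, θ' x = θ (T x))

include hθ in
lemma inv0 (h : θ = 0) : θ' = 0 := by
  refine LinearMap.ext fun x => ?_
  rw [hθ x, h]; rfl

include hT hθ in
lemma inv1 (h : ⇑θ = fun x => ∑ i, x i) : ⇑θ' = fun x => ∑ i, x i := by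
  funext x
  rw [hθ x, h]
  calc (∑ i, T x i) = ∑ i, T x i * T x i := Finset.sum_congr rfl fun i _ => (z2ms _).symm
    _ = ∑ i, x i * x i := hT x x
    _ = ∑ i, x i := Finset.sum_congr rfl fun i _ => z2ms _

include hT hθ in
lemma invS : ∑ i, θ' (Pi.single i 1) = ∑ i, θ (Pi.single i 1) := by
  have h2 : ∀ ψ : (Fin n → ZMod 2) →ₗ[ZMod 2] ZMod 2,
      ∑ i, ψ (Pi.single i 1) = ψ (fun _ => 1) := by
    intro ψ; rw [← sum_ones, map_sum]
  rw [h2 θ', h2 θ, hθ, fix_one T hT]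

end invariance

end FourOrbitsAux

open FourOrbitsAux

/-- For `g ≥ 2`, under the right-composition action of the orthogonal group, the set of
linear forms on `V = Fin (g+1) → ZMod 2` is the disjoint union of exactly four orbits:
`{θ₀}`, `{θ₁}`, `orb₀ = {θ ≠ θ₀, θ₁ | ∑ θ(eᵢ) = 0}` and
`orb₁ = {θ ≠ θ₀, θ₁ | ∑ θ(eᵢ) = 1}`. -/
theorem four_orbits (g : ℕ) (hg : 2 ≤ g) :
    let V := Fin (g + 1) → ZMod 2
    let SameOrbit : (V →ₗ[ZMod 2] ZMod 2) → (V →ₗ[ZMod 2] ZMod 2) → Prop :=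
      fun θ θ' => ∃ T : V ≃ₗ[ZMod 2] V,
        (∀ x y : V, ∑ i, T x i * T y i = ∑ i, x i * y i) ∧ ∀ x : V, θ' x = θ (T x)
    let S0 : Set (V →ₗ[ZMod 2] ZMod 2) := {θ | θ = 0}
    let S1 : Set (V →ₗ[ZMod 2] ZMod 2) := {θ | ⇑θ = fun x : V => ∑ i, x i}
    let orb0 : Set (V →ₗ[ZMod 2] ZMod 2) :=
      {θ | θ ∉ S0 ∧ θ ∉ S1 ∧ ∑ i, θ (Pi.single i (1 : ZMod 2)) = 0}
    let orb1 : Set (V →ₗ[ZMod 2] ZMod 2) :=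
      {θ | θ ∉ S0 ∧ θ ∉ S1 ∧ ∑ i, θ (Pi.single i (1 : ZMod 2)) = 1}
    -- the four sets cover all linear forms
    (∀ θ : V →ₗ[ZMod 2] ZMod 2, θ ∈ S0 ∨ θ ∈ S1 ∨ θ ∈ orb0 ∨ θ ∈ orb1) ∧
    -- they are pairwise disjoint
    (S0 ∩ S1 = ∅) ∧ (S0 ∩ orb0 = ∅) ∧ (S0 ∩ orb1 = ∅) ∧
    (S1 ∩ orb0 = ∅) ∧ (S1 ∩ orb1 = ∅) ∧ (orb0 ∩ orb1 = ∅) ∧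
    -- all four are nonempty
    S0.Nonempty ∧ S1.Nonempty ∧ orb0.Nonempty ∧ orb1.Nonempty ∧
    -- each of them is a single orbit: two forms are in the same orbit
    -- iff they belong to the same one of the four sets
    (∀ θ θ' : V →ₗ[ZMod 2] ZMod 2, SameOrbit θ θ' ↔
      ((θ ∈ S0 ∧ θ' ∈ S0) ∨ (θ ∈ S1 ∧ θ' ∈ S1) ∨
       (θ ∈ orb0 ∧ θ' ∈ orb0) ∨ (θ ∈ orb1 ∧ θ' ∈ orb1))) := by
  intro V SameOrbit S0 S1 orb0 orb1
  have i0 : Fin (g + 1) := ⟨0, by omega⟩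
  set n := g + 1 with hn
  have hi0 : (0 : ℕ) < n := by omega
  have hi1 : (1 : ℕ) < n := by omega
  have hi2 : (2 : ℕ) < n := by omega
  set j0 : Fin n := ⟨0, hi0⟩ with hj0
  set j1 : Fin n := ⟨1, hi1⟩ with hj1
  set j2 : Fin n := ⟨2, hi2⟩ with hj2
  have ne01 : j0 ≠ j1 := fun hh => absurd (congrArg Fin.val hh) (show (0:ℕ) ≠ 1 by omega)
  have ne02 : j0 ≠ j2 := fun hh => absurd (congrArg Fin.val hh) (show (0:ℕ) ≠ 2 by omega)
  have ne12 : j1 ≠ j2 := fun hh => absurd (congrArg Fin.val hh) (show (1:ℕ) ≠ 2 by omega)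
  -- cover
  have cover : ∀ θ : V →ₗ[ZMod 2] ZMod 2, θ ∈ S0 ∨ θ ∈ S1 ∨ θ ∈ orb0 ∨ θ ∈ orb1 := by
    intro θ
    by_cases h0 : θ = 0
    · exact Or.inl h0
    by_cases h1 : ⇑θ = fun x : V => ∑ i, x i
    · exact Or.inr (Or.inl h1)
    rcases z2 (∑ i, θ (Pi.single i (1 : ZMod 2))) with hs | hs
    · exact Or.inr (Or.inr (Or.inl ⟨h0, h1, hs⟩))
    · exact Or.inr (Or.inr (Or.inr ⟨h0, h1, hs⟩))
  refine ⟨cover, ?_, ?_, ?_, ?_, ?_, ?_, ?_, ?_, ?_, ?_, ?_⟩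
  -- S0 ∩ S1 = ∅
  · refine Set.eq_empty_iff_forall_notMem.mpr ?_
    rintro θ ⟨h1, h2⟩
    have hx : θ (Pi.single j0 1) = 1 := by
      rw [congrFun h2 (Pi.single j0 1)]
      exact sum_single j0
    rw [show θ = 0 from h1] at hx
    simp at hx
  -- S0 ∩ orb0 = ∅
  · refine Set.eq_empty_iff_forall_notMem.mpr ?_
    rintro θ ⟨h1, h2⟩
    exact h2.1 h1
  -- S0 ∩ orb1 = ∅
  · refine Set.eq_empty_iff_forall_notMem.mpr ?_
    rintro θ ⟨h1, h2⟩
    exact h2.1 h1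
  -- S1 ∩ orb0 = ∅
  · refine Set.eq_empty_iff_forall_notMem.mpr ?_
    rintro θ ⟨h1, h2⟩
    exact h2.2.1 h1
  -- S1 ∩ orb1 = ∅
  · refine Set.eq_empty_iff_forall_notMem.mpr ?_
    rintro θ ⟨h1, h2⟩
    exact h2.2.1 h1
  -- orb0 ∩ orb1 = ∅
  · refine Set.eq_empty_iff_forall_notMem.mpr ?_
    rintro θ ⟨h1, h2⟩
    exact zero_ne_one (h1.2.2.symm.trans h2.2.2)
  -- S0 nonempty
  · exact ⟨0, rfl⟩
  -- S1 nonempty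
  · refine ⟨formL (fun _ => 1), ?_⟩
    show ⇑(formL fun _ => (1 : ZMod 2)) = fun x : V => ∑ i, x i
    funext x
    show ∑ i, (1 : ZMod 2) * x i = ∑ i, x i
    exact Finset.sum_congr rfl fun i _ => one_mul _
  -- orb0 nonempty
  · refine ⟨formL (Pi.single j0 1 + Pi.single j1 1), ?_, ?_, ?_⟩
    · intro h
      have hx : formL (Pi.single j0 1 + Pi.single j1 1 : V) (Pi.single j0 1) = 0 := by
        rw [show formL (Pi.single j0 1 + Pi.single j1 1 : V) = 0 from h]; rfl
      rw [formL_apply, dot_single, Pi.add_apply, Pi.single_eq_same,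
        Pi.single_eq_of_ne ne01, add_zero] at hx
      exact one_ne_zero hx
    · intro h
      have hx := congrFun h (Pi.single j2 1)
      rw [formL_apply, dot_single, Pi.add_apply, Pi.single_eq_of_ne ne02.symm,
        Pi.single_eq_of_ne ne12.symm, add_zero] at hx
      rw [sum_single j2] at hx
      exact zero_ne_one hx
    · have h1 : ∀ i, formL (Pi.single j0 1 + Pi.single j1 1 : V) (Pi.single i 1)
          = (Pi.single j0 1 : V) i + (Pi.single j1 1 : V) i := by
        intro i
        rw [formL_apply, dot_single, Pi.add_apply]
      rw [Finset.sum_congr rfl fun i _ => h1 i, Finset.sum_add_distrib,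
        sum_single, sum_single]
      decide
  -- orb1 nonempty
  · refine ⟨formL (Pi.single j0 1), ?_, ?_, ?_⟩
    · intro h
      have hx : formL (Pi.single j0 1 : V) (Pi.single j0 1) = 0 := by
        rw [show formL (Pi.single j0 1 : V) = 0 from h]; rfl
      rw [formL_apply, dot_single, Pi.single_eq_same] at hx
      exact one_ne_zero hx
    · intro h
      have hx := congrFun h (Pi.single j1 1)
      rw [formL_apply, dot_single, Pi.single_eq_of_ne ne01.symm] at hx
      rw [sum_single j1] at hx
      exact zero_ne_one hx
    · have h1 : ∀ i, formL (Pi.single j0 1 : V) (Pi.single i 1)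
          = (Pi.single j0 1 : V) i := by
        intro i
        rw [formL_apply, dot_single]
      rw [Finset.sum_congr rfl fun i _ => h1 i, sum_single]
  -- orbit characterization
  · intro θ θ'
    constructor
    · rintro ⟨T, hT, hθ⟩
      have hT' : ∀ x y, dot (T x) (T y) = dot x y := hT
      have hT'' : ∀ x y, dot (T.symm x) (T.symm y) = dot x y := by
        intro x y
        have h := hT' (T.symm x) (T.symm y)
        rw [T.apply_symm_apply, T.apply_symm_apply] at h
        exact h.symm
      have hθ' : ∀ x, θ x = θ' (T.symm x) := by
        intro x
        rw [hθ (T.symm x), T.apply_symm_apply]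
      have e0 : (θ = 0) ↔ (θ' = 0) :=
        ⟨inv0 θ θ' T hθ, inv0 θ' θ T.symm hθ'⟩
      have e1 : (⇑θ = fun x : V => ∑ i, x i) ↔ (⇑θ' = fun x : V => ∑ i, x i) :=
        ⟨inv1 θ θ' T hT' hθ, inv1 θ' θ T.symm hT'' hθ'⟩
      have es : ∑ i, θ' (Pi.single i 1) = ∑ i, θ (Pi.single i 1) :=
        invS θ θ' T hT' hθ
      by_cases h0 : θ = 0
      · exact Or.inl ⟨h0, e0.mp h0⟩
      by_cases h1 : ⇑θ = fun x : V => ∑ i, x i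
      · exact Or.inr (Or.inl ⟨h1, e1.mp h1⟩)
      rcases z2 (∑ i, θ (Pi.single i (1 : ZMod 2))) with hs | hs
      · exact Or.inr (Or.inr (Or.inl ⟨⟨h0, h1, hs⟩,
          fun h => h0 (e0.mpr h), fun h => h1 (e1.mpr h), es.trans hs⟩))
      · exact Or.inr (Or.inr (Or.inr ⟨⟨h0, h1, hs⟩,
          fun h => h0 (e0.mpr h), fun h => h1 (e1.mpr h), es.trans hs⟩))
    · have key : ∀ b : ZMod 2, (θ ∉ S0 ∧ θ ∉ S1 ∧ ∑ i, θ (Pi.single i (1 : ZMod 2)) = b) →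
          (θ' ∉ S0 ∧ θ' ∉ S1 ∧ ∑ i, θ' (Pi.single i (1 : ZMod 2)) = b) →
          SameOrbit θ θ' := by
        intro b ⟨hn0, hn1, hsum⟩ ⟨hn0', hn1', hsum'⟩
        have hv0 : (fun i => θ (Pi.single i (1 : ZMod 2))) ≠ 0 := by
          intro hv
          apply hn0
          refine LinearMap.ext fun x => ?_
          rw [apply_eq_dot θ x, hv]
          show dot 0 x = 0
          simp [dot]
        have hv1 : (fun i => θ (Pi.single i (1 : ZMod 2))) ≠ fun _ => 1 := by
          intro hv
          apply hn1
          funext x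
          rw [apply_eq_dot θ x, hv]
          show ∑ i, (1 : ZMod 2) * x i = ∑ i, x i
          exact Finset.sum_congr rfl fun i _ => one_mul _
        have hw0 : (fun i => θ' (Pi.single i (1 : ZMod 2))) ≠ 0 := by
          intro hv
          apply hn0'
          refine LinearMap.ext fun x => ?_
          rw [apply_eq_dot θ' x, hv]
          show dot 0 x = 0
          simp [dot]
        have hw1 : (fun i => θ' (Pi.single i (1 : ZMod 2))) ≠ fun _ => 1 := by
          intro hv
          apply hn1'
          funext x
          rw [apply_eq_dot θ' x, hv]
          show ∑ i, (1 : ZMod 2) * x i = ∑ i, x i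
          exact Finset.sum_congr rfl fun i _ => one_mul _
        have hq : dot (fun i => θ (Pi.single i (1 : ZMod 2)))
            (fun i => θ (Pi.single i (1 : ZMod 2)))
            = dot (fun i => θ' (Pi.single i (1 : ZMod 2)))
              (fun i => θ' (Pi.single i (1 : ZMod 2))) := by
          rw [dot_self, dot_self, hsum, hsum']
        obtain ⟨T, hT, hE⟩ := exists_T _ _ hv0 hv1 hw0 hw1 hq
        refine ⟨T, hT, fun x => ?_⟩
        rw [apply_eq_dot θ' x, apply_eq_dot θ (T x)]
        exact hE x
      rintro (⟨h, h'⟩ | ⟨h, h'⟩ | ⟨h, h'⟩ | ⟨h, h'⟩)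
      · refine ⟨LinearEquiv.refl _ _, fun x y => rfl, fun x => ?_⟩
        rw [show θ' = 0 from h', show θ = 0 from h]
        rfl
      · have hco : θ = θ' := DFunLike.coe_injective
          ((show ⇑θ = fun x : V => ∑ i, x i from h).trans
            (show ⇑θ' = fun x : V => ∑ i, x i from h').symm)
        exact ⟨LinearEquiv.refl _ _, fun x y => rfl, fun x => by rw [hco]; rfl⟩
      · exact key 0 h h'
      · exact key 1 h h'
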